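/- Fix j ∈ {1,…,N}, assume k < N − 2, and let (i₁,…,i_k) be a uniformly random ordered k-tuple of distinct indices from {1,…,N}\{j}. Set Y_l = μ_{j,i_l}² for l = 1,…,k, Z₀ = E[Σ_{l=1}^k Y_l], and Z_t = E[Σ_{l=1}^k Y_l | Y₁,…,Y_t] for t = 1,…,k. Then (Z_t)_{t=0,…,k} is a martingale with respect to the filtration generated by Y₁,…,Y_t, and |Z_t − Z_{t−1}| ≤ 2μ²·(N−2)/(N−k−2) = 2μ²·(1 + k/(N−k−2)) for every t = 1,…,k. -/

import Mathlib

open Finset Matrix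

open scoped Classical

noncomputable section

/-- The ℓ₂→ℓ₂ operator (spectral) norm of a real matrix. -/
def specNorm {α β : Type*} [Fintype α] [Fintype β] (A : Matrix α β ℝ) : ℝ :=
  sSup {t : ℝ | ∃ x : β → ℝ, (∑ j, x j ^ 2) ≤ 1 ∧ t = Real.sqrt (∑ i, (∑ j, A i j * x j) ^ 2)}

variable {m N : ℕ}

/-- The submatrix of `Φ` formed by the columns indexed by `I`. -/
def colSub (Φ : Matrix (Fin m) (Fin N) ℝ) (I : Finset (Fin N)) :
    Matrix (Fin m) {i // i ∈ I} ℝ :=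
  Matrix.of fun r j => Φ r (j : Fin N)

/-- The Gram matrix `Φ_Iᵀ Φ_I`. -/
def gram (Φ : Matrix (Fin m) (Fin N) ℝ) (I : Finset (Fin N)) :
    Matrix {i // i ∈ I} {i // i ∈ I} ℝ :=
  (colSub Φ I)ᵀ * colSub Φ I

/-- `‖Φ_Iᵀ φ_i‖₂²`. -/
def sincSq (Φ : Matrix (Fin m) (Fin N) ℝ) (I : Finset (Fin N)) (i : Fin N) : ℝ :=
  ∑ j ∈ I, (∑ r, Φ r j * Φ r i) ^ 2

/-- All columns of `Φ` have unit ℓ₂ norm. -/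
def unitCols (Φ : Matrix (Fin m) (Fin N) ℝ) : Prop :=
  ∀ j, (∑ r, Φ r j ^ 2) = 1

/-- `Φ` is `(k,δ,ε)`-StRIP: a uniformly random `k`-subset `I` satisfies
`‖Φ_Iᵀ Φ_I − Id‖ ≤ δ` with probability at least `1 − ε`. -/
def StRIP (Φ : Matrix (Fin m) (Fin N) ℝ) (k : ℕ) (δ ε : ℝ) : Prop :=
  (1 - ε) * ((Finset.powersetCard k (univ : Finset (Fin N))).card : ℝ) ≤
    (((Finset.powersetCard k (univ : Finset (Fin N))).filter
        fun I => specNorm (gram Φ I - 1) ≤ δ).card : ℝ)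

/-- `Φ` is `(k,α,ε)`-SINC: a uniformly random `k`-subset `I` satisfies
`max_{i ∉ I} ‖Φ_Iᵀ φ_i‖₂² ≤ α` with probability at least `1 − ε`. -/
def SINC (Φ : Matrix (Fin m) (Fin N) ℝ) (k : ℕ) (α ε : ℝ) : Prop :=
  (1 - ε) * ((Finset.powersetCard k (univ : Finset (Fin N))).card : ℝ) ≤
    (((Finset.powersetCard k (univ : Finset (Fin N))).filter
        fun I => ∀ i ∉ I, sincSq Φ I i ≤ α).card : ℝ)

/-- ℓ₁ norm on `ℝ^N`. -/
def l1 (x : Fin N → ℝ) : ℝ := ∑ i, |x i|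

/-- ℓ₂ norm on `ℝ^N`. -/
def l2 (x : Fin N → ℝ) : ℝ := Real.sqrt (∑ i, x i ^ 2)

/-- Restriction `x_I` of a vector to the coordinates in `I` (zero outside `I`). -/
def restr (I : Finset (Fin N)) (x : Fin N → ℝ) : Fin N → ℝ :=
  fun i => if i ∈ I then x i else 0

/-- `x` is `k`-sparse. -/
def kSparse (k : ℕ) (x : Fin N → ℝ) : Prop :=
  ((univ : Finset (Fin N)).filter fun i => x i ≠ 0).card ≤ k

/-- `min_{x' k-sparse} ‖x − x′‖₁`. -/
def bestK (k : ℕ) (x : Fin N → ℝ) : ℝ :=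
  sInf {t : ℝ | ∃ x' : Fin N → ℝ, kSparse k x' ∧ t = l1 (x - x')}

/-- `xh` is a (noiseless) Basis Pursuit solution for the data `y`. -/
def isBPsol (Φ : Matrix (Fin m) (Fin N) ℝ) (y : Fin m → ℝ) (xh : Fin N → ℝ) : Prop :=
  Φ.mulVec xh = y ∧ ∀ u : Fin N → ℝ, Φ.mulVec u = y → l1 xh ≤ l1 u

/-- Inner product of columns `i` and `j` of `Φ`. -/
def ip (Φ : Matrix (Fin m) (Fin N) ℝ) (i j : Fin N) : ℝ := ∑ r, Φ r i * Φ r j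

/-- Mean square coherence `μ̄² = (1/(N(N−1))) Σ_{i≠j} μ_ij²`. -/
def mu2bar (Φ : Matrix (Fin m) (Fin N) ℝ) : ℝ :=
  (∑ i, ∑ j ∈ (univ : Finset (Fin N)).erase i, (ip Φ i j) ^ 2) / ((N : ℝ) * ((N : ℝ) - 1))

/-- Maximum average square coherence `μ̄²_max = max_j (1/(N−1)) Σ_{i≠j} μ_ij²`. -/
def mu2max (Φ : Matrix (Fin m) (Fin N) ℝ) : ℝ :=
  sSup {t : ℝ | ∃ j : Fin N,
    t = (∑ i ∈ (univ : Finset (Fin N)).erase j, (ip Φ i j) ^ 2) / ((N : ℝ) - 1)}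

/-- `Φ` is coherence-invariant: the multiset `{μ_ij : j ≠ i}` does not depend on `i`. -/
def CoherenceInvariant (Φ : Matrix (Fin m) (Fin N) ℝ) : Prop :=
  ∀ i i' : Fin N,
    Multiset.map (fun j => |ip Φ i j|) ((univ : Finset (Fin N)).erase i).val =
    Multiset.map (fun j => |ip Φ i' j|) ((univ : Finset (Fin N)).erase i').val

open MeasureTheory
open scoped ENNReal

/-- Ordered `k`-tuples of distinct indices from `{1,…,N} \ {j}`. -/
def OmegaT (N k : ℕ) (j : Fin N) : Type :=
  {f : Fin k → Fin N // Function.Injective f ∧ ∀ l, f l ≠ j}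

instance (N k : ℕ) (j : Fin N) : Fintype (OmegaT N k j) := by
  unfold OmegaT; infer_instance

instance (N k : ℕ) (j : Fin N) : MeasurableSpace (OmegaT N k j) := ⊤

/-- The uniform probability measure on ordered `k`-tuples. -/
def unifT (N k : ℕ) (j : Fin N) : Measure (OmegaT N k j) :=
  (Fintype.card (OmegaT N k j) : ℝ≥0∞)⁻¹ • Measure.count

/-- The filtration generated by `Y₁, …, Y_t`. -/
def filtY {Ω : Type} {k : ℕ} (Y : Fin k → Ω → ℝ) :
    Filtration ℕ (⊤ : MeasurableSpace Ω) where
  seq := fun t => ⨆ l : {l : Fin k // (l : ℕ) < t},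
    MeasurableSpace.comap (Y l) inferInstance
  mono' := fun s t hst =>
    iSup_le fun l => le_iSup_of_le ⟨l.1, lt_of_lt_of_le l.2 hst⟩ le_rfl
  le' := fun _ => le_top

-- ===== auxiliary development =====
namespace Stmt9Aux

variable {m N k : ℕ} {j : Fin N}

instance : MeasurableSingletonClass (OmegaT N k j) := ⟨fun _ => trivial⟩

instance : IsFiniteMeasure (unifT N k j) := by
  constructor
  rw [unifT, Measure.smul_apply, Measure.count_univ, smul_eq_mul]
  rw [ENat.card_eq_coe_fintype_card, ENat.toENNReal_coe]
  exact lt_of_le_of_lt (ENNReal.inv_mul_le_one _) ENNReal.one_lt_top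

def Vmap (Φ : Matrix (Fin m) (Fin N) ℝ) (j : Fin N) (t : ℕ) (ω : OmegaT N k j) : Fin k → ℝ :=
  fun l => if (l : ℕ) < t then (ip Φ j (ω.1 l)) ^ 2 else 0

def sigT (Φ : Matrix (Fin m) (Fin N) ℝ) (j : Fin N) (t : ℕ) (ω : OmegaT N k j) : ℝ :=
  ∑ l ∈ univ.filter (fun l : Fin k => (l : ℕ) < t), (ip Φ j (ω.1 l)) ^ 2

def Tsum (Φ : Matrix (Fin m) (Fin N) ℝ) (j : Fin N) : ℝ :=
  ∑ i ∈ (univ : Finset (Fin N)).erase j, (ip Φ j i) ^ 2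

def gfun (Φ : Matrix (Fin m) (Fin N) ℝ) (j : Fin N) (k : ℕ) (t : ℕ) (ω : OmegaT N k j) : ℝ :=
  sigT Φ j t ω + ((k - t : ℕ) : ℝ) * (Tsum Φ j - sigT Φ j t ω) / ((N : ℝ) - 1 - t)

def updOm (ω : OmegaT N k j) (l : Fin k) (v : Fin N) (hv : ∀ s, ω.1 s ≠ v) (hvj : v ≠ j) :
    OmegaT N k j :=
  ⟨Function.update ω.1 l v, by
    intro a b hab
    by_cases ha : a = l <;> by_cases hb : b = l
    · rw [ha, hb]
    · subst ha
      rw [Function.update_self, Function.update_of_ne hb] at hab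
      exact absurd hab.symm (hv b)
    · subst hb
      rw [Function.update_self, Function.update_of_ne ha] at hab
      exact absurd hab (hv a)
    · rw [Function.update_of_ne ha, Function.update_of_ne hb] at hab
      exact ω.2.1 hab,
   by
    intro s
    rcases eq_or_ne s l with rfl | hs
    · rw [Function.update_self]; exact hvj
    · rw [Function.update_of_ne hs]; exact ω.2.2 s⟩

def swapMap : (OmegaT N k j × (Fin k × Fin N)) → (OmegaT N k j × (Fin k × Fin N)) :=
  fun p => if h : (∀ s, p.1.1 s ≠ p.2.2) ∧ p.2.2 ≠ j then
    (updOm p.1 p.2.1 p.2.2 h.1 h.2, (p.2.1, p.1.1 p.2.1)) else p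

lemma updOm_fresh (ω : OmegaT N k j) (l : Fin k) (v : Fin N) (hv : ∀ s, ω.1 s ≠ v) (hvj : v ≠ j) :
    ∀ s, (updOm ω l v hv hvj).1 s ≠ ω.1 l := by
  intro s
  rcases eq_or_ne s l with rfl | hs
  · show Function.update ω.1 s v s ≠ ω.1 s
    rw [Function.update_self]; exact fun hh => hv s hh.symm
  · show Function.update ω.1 l v s ≠ ω.1 l
    rw [Function.update_of_ne hs]; exact fun hh => hs (ω.2.1 hh)

lemma swapMap_pos (ω : OmegaT N k j) (l : Fin k) (v : Fin N)
    (h : (∀ s, ω.1 s ≠ v) ∧ v ≠ j) :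
    swapMap (ω, (l, v)) = (updOm ω l v h.1 h.2, (l, ω.1 l)) := by
  simp only [swapMap]; rw [dif_pos h]

lemma swapMap_neg (ω : OmegaT N k j) (l : Fin k) (v : Fin N)
    (h : ¬ ((∀ s, ω.1 s ≠ v) ∧ v ≠ j)) :
    swapMap (ω, (l, v)) = (ω, (l, v)) := by
  simp only [swapMap]; rw [dif_neg h]

lemma swapMap_involutive : Function.Involutive (swapMap (N := N) (k := k) (j := j)) := by
  rintro ⟨ω, l, v⟩
  by_cases h : (∀ s, ω.1 s ≠ v) ∧ v ≠ j
  · rw [swapMap_pos ω l v h, swapMap_pos _ l _ ⟨updOm_fresh ω l v h.1 h.2, ω.2.2 l⟩]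
    refine Prod.ext ?_ (Prod.ext rfl ?_)
    · apply Subtype.ext
      show Function.update (Function.update ω.1 l v) l (ω.1 l) = ω.1
      rw [Function.update_idem, Function.update_eq_self]
    · show Function.update ω.1 l v l = v
      exact Function.update_self ..
  · rw [swapMap_neg ω l v h, swapMap_neg ω l v h]

def Vset (ω : OmegaT N k j) : Finset (Fin N) :=
  ((univ : Finset (Fin N)).erase j) \ (univ.image ω.1)

lemma himg (ω : OmegaT N k j) : (univ.image ω.1 : Finset (Fin N)) ⊆ (univ : Finset (Fin N)).erase j := by
  intro i hi
  rcases Finset.mem_image.1 hi with ⟨l, -, rfl⟩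
  exact Finset.mem_erase.2 ⟨ω.2.2 l, Finset.mem_univ _⟩

lemma hcardimg (ω : OmegaT N k j) : (univ.image ω.1).card = k := by
  rw [Finset.card_image_of_injective _ ω.2.1, card_univ, Fintype.card_fin]

lemma hcardV (ω : OmegaT N k j) : (Vset ω).card = N - 1 - k := by
  rw [Vset, Finset.card_sdiff_of_subset (himg ω), Finset.card_erase_of_mem (Finset.mem_univ j),
    card_univ, Fintype.card_fin, hcardimg]

lemma hmemV (ω : OmegaT N k j) (v : Fin N) :
    v ∈ Vset ω ↔ ((∀ s, ω.1 s ≠ v) ∧ v ≠ j) := by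
  simp only [Vset, Finset.mem_sdiff, Finset.mem_erase, Finset.mem_univ, and_true,
    Finset.mem_image, not_exists, true_and]
  tauto

lemma hTsplit (Φ : Matrix (Fin m) (Fin N) ℝ) (ω : OmegaT N k j) :
    Tsum Φ j = (∑ l : Fin k, (ip Φ j (ω.1 l)) ^ 2) + ∑ v ∈ Vset ω, (ip Φ j v) ^ 2 := by
  have h1 := Finset.sum_sdiff (f := fun v => (ip Φ j v) ^ 2) (himg ω)
  rw [Tsum, ← h1, Finset.sum_image (fun a _ b _ hab => ω.2.1 hab), Vset]
  exact add_comm _ _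

lemma card_filter_fin (t : ℕ) (p : ℕ → Prop) [DecidablePred p] :
    ((univ : Finset (Fin k)).filter (fun l => p l.1)).card = ((Finset.range k).filter p).card := by
  rw [← Finset.card_image_of_injective ((univ : Finset (Fin k)).filter (fun l => p l.1))
    Fin.val_injective]
  congr 1
  ext n
  simp only [Finset.mem_image, Finset.mem_filter, Finset.mem_univ, true_and, Finset.mem_range]
  constructor
  · rintro ⟨l, hl, rfl⟩; exact ⟨l.2, hl⟩
  · rintro ⟨hn, hp⟩; exact ⟨⟨n, hn⟩, hp, rfl⟩

lemma card_lt_t (t : ℕ) (ht : t ≤ k) :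
    ((univ : Finset (Fin k)).filter (fun l : Fin k => (l : ℕ) < t)).card = t := by
  rw [card_filter_fin t (fun n => n < t)]
  have : (Finset.range k).filter (fun n => n < t) = Finset.range t := by
    ext n; simp only [Finset.mem_filter, Finset.mem_range]; omega
  rw [this, Finset.card_range]

lemma card_ge_t (t : ℕ) (ht : t ≤ k) :
    ((univ : Finset (Fin k)).filter (fun l : Fin k => ¬ ((l : ℕ) < t))).card = k - t := by
  rw [card_filter_fin t (fun n => ¬ n < t)]
  have : (Finset.range k).filter (fun n => ¬ n < t) = (Finset.range k) \ (Finset.range t) := by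
    ext n; simp only [Finset.mem_filter, Finset.mem_range, Finset.mem_sdiff]; try omega
  rw [this, Finset.card_sdiff_of_subset (Finset.range_subset_range.2 ht), Finset.card_range, Finset.card_range]

lemma Vmap_updOm (Φ : Matrix (Fin m) (Fin N) ℝ) (t : ℕ) (ω : OmegaT N k j) (l : Fin k)
    (v : Fin N) (hv : ∀ s, ω.1 s ≠ v) (hvj : v ≠ j) (hl : ¬ ((l : ℕ) < t)) :
    Vmap Φ j t (updOm ω l v hv hvj) = Vmap Φ j t ω := by
  funext l'
  by_cases hl' : (l' : ℕ) < t
  · have hne : l' ≠ l := fun h => hl (h ▸ hl')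
    simp only [Vmap, if_pos hl']
    congr 2
    show Function.update ω.1 l v l' = ω.1 l'
    rw [Function.update_of_ne hne]
  · simp only [Vmap, if_neg hl']


noncomputable def ind (P : Prop) (x : ℝ) : ℝ := if P then x else 0

lemma ind_pos {P : Prop} (h : P) (x : ℝ) : ind P x = x := if_pos h

lemma ind_neg {P : Prop} (h : ¬ P) (x : ℝ) : ind P x = 0 := if_neg h

lemma sum_ind_mem {α : Type*} [Fintype α] (s : Finset α) (f : α → ℝ) :
    ∑ x : α, ind (x ∈ s) (f x) = ∑ x ∈ s, f x := by
  classical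
  have h : ∀ x, ind (x ∈ s) (f x) = if x ∈ s then f x else 0 := by
    intro x
    by_cases hx : x ∈ s
    · rw [ind_pos hx, if_pos hx]
    · rw [ind_neg hx, if_neg hx]
  rw [Finset.sum_congr rfl (fun x _ => h x), Finset.sum_ite_mem univ s, Finset.univ_inter]

set_option maxHeartbeats 1000000 in
lemma exchange (Φ : Matrix (Fin m) (Fin N) ℝ) (t : ℕ)
    (A : Finset (OmegaT N k j)) (Lt : Finset (Fin k))
    (hAV : ∀ (ω ω' : OmegaT N k j), Vmap Φ j t ω' = Vmap Φ j t ω → (ω ∈ A ↔ ω' ∈ A))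
    (hLt : ∀ l : Fin k, l ∈ Lt → ¬ ((l : ℕ) < t)) :
    ∑ ω ∈ A, ∑ l ∈ Lt, ∑ v ∈ Vset ω, (ip Φ j (ω.1 l)) ^ 2
      = ∑ ω ∈ A, ∑ l ∈ Lt, ∑ v ∈ Vset ω, (ip Φ j v) ^ 2 := by
  have hconv : ∀ f : OmegaT N k j → Fin k → Fin N → ℝ,
      (∑ p : OmegaT N k j × (Fin k × Fin N),
        ind (p.1 ∈ A ∧ p.2.1 ∈ Lt ∧ p.2.2 ∈ Vset p.1) (f p.1 p.2.1 p.2.2))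
      = ∑ ω ∈ A, ∑ l ∈ Lt, ∑ v ∈ Vset ω, f ω l v := by
    intro f
    rw [Fintype.sum_prod_type]
    have inner : ∀ ω : OmegaT N k j,
        (∑ q : Fin k × Fin N, ind (ω ∈ A ∧ q.1 ∈ Lt ∧ q.2 ∈ Vset ω) (f ω q.1 q.2))
          = ind (ω ∈ A) (∑ l ∈ Lt, ∑ v ∈ Vset ω, f ω l v) := by
      intro ω
      rw [Fintype.sum_prod_type]
      have h2 : ∀ l : Fin k,
          (∑ v : Fin N, ind (ω ∈ A ∧ l ∈ Lt ∧ v ∈ Vset ω) (f ω l v))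
            = ind (ω ∈ A) (ind (l ∈ Lt) (∑ v ∈ Vset ω, f ω l v)) := by
        intro l
        by_cases hω : ω ∈ A <;> by_cases hl : l ∈ Lt
        · rw [ind_pos hω, ind_pos hl, ← sum_ind_mem (Vset ω) (f ω l)]
          exact Finset.sum_congr rfl fun v _ => by
            by_cases hv : v ∈ Vset ω
            · rw [ind_pos ⟨hω, hl, hv⟩, ind_pos hv]
            · rw [ind_neg (fun hc => hv hc.2.2), ind_neg hv]
        · rw [ind_pos hω, ind_neg hl]
          exact Finset.sum_eq_zero fun v _ => ind_neg (fun hc => hl hc.2.1) _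
        · rw [ind_neg hω]
          exact Finset.sum_eq_zero fun v _ => ind_neg (fun hc => hω hc.1) _
        · rw [ind_neg hω]
          exact Finset.sum_eq_zero fun v _ => ind_neg (fun hc => hω hc.1) _
      rw [Finset.sum_congr rfl (fun l _ => h2 l)]
      by_cases hω : ω ∈ A
      · rw [ind_pos hω]
        rw [Finset.sum_congr rfl (fun l (_ : l ∈ univ) => by rw [ind_pos hω]),
          sum_ind_mem Lt]
      · rw [ind_neg hω]
        exact Finset.sum_eq_zero fun l _ => by rw [ind_neg hω]
    rw [Finset.sum_congr rfl (fun ω _ => inner ω), sum_ind_mem A]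
  have h3 : ∀ p : OmegaT N k j × (Fin k × Fin N),
      ind ((swapMap p).1 ∈ A ∧ (swapMap p).2.1 ∈ Lt ∧ (swapMap p).2.2 ∈ Vset (swapMap p).1)
          ((ip Φ j ((swapMap p).1.1 (swapMap p).2.1)) ^ 2)
        = ind (p.1 ∈ A ∧ p.2.1 ∈ Lt ∧ p.2.2 ∈ Vset p.1) ((ip Φ j p.2.2) ^ 2) := by
    rintro ⟨ω, l, v⟩
    by_cases h : (∀ s, ω.1 s ≠ v) ∧ v ≠ j
    · rw [swapMap_pos ω l v h]
      by_cases hl : l ∈ Lt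
      · have hlt : ¬ ((l : ℕ) < t) := hLt l hl
        have hVeq : Vmap Φ j t (updOm ω l v h.1 h.2) = Vmap Φ j t ω :=
          Vmap_updOm Φ t ω l v h.1 h.2 hlt
        have hAiff : (updOm ω l v h.1 h.2) ∈ A ↔ ω ∈ A := (hAV ω _ hVeq).symm
        have hval : (updOm ω l v h.1 h.2).1 l = v := Function.update_self ..
        have hmem3 : ω.1 l ∈ Vset (updOm ω l v h.1 h.2) :=
          (hmemV _ _).2 ⟨updOm_fresh ω l v h.1 h.2, ω.2.2 l⟩
        have hmemv : v ∈ Vset ω := (hmemV ω v).2 h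
        by_cases hωA : ω ∈ A
        · rw [ind_pos ⟨hAiff.2 hωA, hl, hmem3⟩, ind_pos ⟨hωA, hl, hmemv⟩, hval]
        · rw [ind_neg (fun hc => hωA (hAiff.1 hc.1)), ind_neg (fun hc => hωA hc.1)]
      · rw [ind_neg (fun hc => hl hc.2.1), ind_neg (fun hc => hl hc.2.1)]
    · rw [swapMap_neg ω l v h]
      have hnv : v ∉ Vset ω := fun hc => h ((hmemV ω v).1 hc)
      rw [ind_neg (fun hc => hnv hc.2.2), ind_neg (fun hc => hnv hc.2.2)]
  calc ∑ ω ∈ A, ∑ l ∈ Lt, ∑ v ∈ Vset ω, (ip Φ j (ω.1 l)) ^ 2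
      = ∑ p : OmegaT N k j × (Fin k × Fin N),
          ind (p.1 ∈ A ∧ p.2.1 ∈ Lt ∧ p.2.2 ∈ Vset p.1) ((ip Φ j (p.1.1 p.2.1)) ^ 2) :=
        (hconv (fun ω l _ => (ip Φ j (ω.1 l)) ^ 2)).symm
    _ = ∑ p : OmegaT N k j × (Fin k × Fin N),
          ind ((swapMap p).1 ∈ A ∧ (swapMap p).2.1 ∈ Lt ∧ (swapMap p).2.2 ∈ Vset (swapMap p).1)
            ((ip Φ j ((swapMap p).1.1 (swapMap p).2.1)) ^ 2) :=
        ((swapMap_involutive).bijective.sum_comp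
          (fun p => ind (p.1 ∈ A ∧ p.2.1 ∈ Lt ∧ p.2.2 ∈ Vset p.1)
            ((ip Φ j (p.1.1 p.2.1)) ^ 2))).symm
    _ = ∑ p : OmegaT N k j × (Fin k × Fin N),
          ind (p.1 ∈ A ∧ p.2.1 ∈ Lt ∧ p.2.2 ∈ Vset p.1) ((ip Φ j p.2.2) ^ 2) :=
        Finset.sum_congr rfl fun p _ => h3 p
    _ = ∑ ω ∈ A, ∑ l ∈ Lt, ∑ v ∈ Vset ω, (ip Φ j v) ^ 2 := hconv (fun _ _ v => (ip Φ j v) ^ 2)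

lemma fiber_sum (Φ : Matrix (Fin m) (Fin N) ℝ) (hk : k + 2 < N) (t : ℕ) (ht : t ≤ k)
    (ω₀ : OmegaT N k j) :
    ∑ ω ∈ univ.filter (fun ω : OmegaT N k j => Vmap Φ j t ω = Vmap Φ j t ω₀),
        (∑ l : Fin k, (ip Φ j (ω.1 l)) ^ 2)
      = ∑ ω ∈ univ.filter (fun ω : OmegaT N k j => Vmap Φ j t ω = Vmap Φ j t ω₀),
          gfun Φ j k t ω := by
  set A : Finset (OmegaT N k j) :=
    univ.filter (fun ω => Vmap Φ j t ω = Vmap Φ j t ω₀) with hA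
  set Lt : Finset (Fin k) := univ.filter (fun l : Fin k => ¬ ((l : ℕ) < t)) with hLt
  have hsig : ∀ ω ∈ A, sigT Φ j t ω = sigT Φ j t ω₀ := by
    intro ω hω
    refine Finset.sum_congr rfl fun l hl => ?_
    have hVl := congrFun ((Finset.mem_filter.1 hω).2) l
    have hl' : (l : ℕ) < t := (Finset.mem_filter.1 hl).2
    simpa [Vmap, if_pos hl'] using hVl
  have hsplitS : ∀ ω : OmegaT N k j,
      (∑ l : Fin k, (ip Φ j (ω.1 l)) ^ 2)
        = sigT Φ j t ω + ∑ l ∈ Lt, (ip Φ j (ω.1 l)) ^ 2 :=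
    fun ω => (Finset.sum_filter_add_sum_filter_not univ _ _).symm
  have hkey : ∑ ω ∈ A, ∑ l ∈ Lt, ∑ v ∈ Vset ω, (ip Φ j (ω.1 l)) ^ 2
      = ∑ ω ∈ A, ∑ l ∈ Lt, ∑ v ∈ Vset ω, (ip Φ j v) ^ 2 := by
    refine exchange Φ t A Lt ?_ ?_
    · intro ω ω' hV
      simp only [hA, Finset.mem_filter, Finset.mem_univ, true_and, hV]
    · intro l hl
      exact (Finset.mem_filter.1 hl).2
  set σ0 := sigT Φ j t ω₀ with hσ0
  set X := ∑ ω ∈ A, ∑ l ∈ Lt, (ip Φ j (ω.1 l)) ^ 2 with hX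
  set W := ∑ ω ∈ A, ∑ v ∈ Vset ω, (ip Φ j v) ^ 2 with hW
  have e1 : ((N - 1 - k : ℕ) : ℝ) * X = ((k - t : ℕ) : ℝ) * W := by
    have l1 : ∑ ω ∈ A, ∑ l ∈ Lt, ∑ v ∈ Vset ω, (ip Φ j (ω.1 l)) ^ 2
        = ((N - 1 - k : ℕ) : ℝ) * X := by
      rw [hX, Finset.mul_sum]
      refine Finset.sum_congr rfl fun ω _ => ?_
      rw [Finset.mul_sum]
      refine Finset.sum_congr rfl fun l _ => ?_
      rw [Finset.sum_const, hcardV ω, nsmul_eq_mul]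
    have l2 : ∑ ω ∈ A, ∑ l ∈ Lt, ∑ v ∈ Vset ω, (ip Φ j v) ^ 2
        = ((k - t : ℕ) : ℝ) * W := by
      rw [hW, Finset.mul_sum]
      refine Finset.sum_congr rfl fun ω _ => ?_
      rw [Finset.sum_const, hLt, card_ge_t t ht, nsmul_eq_mul]
    rw [← l1, ← l2, hkey]
  have e2 : W = (A.card : ℝ) * (Tsum Φ j - σ0) - X := by
    have hper : ∀ ω ∈ A, ∑ v ∈ Vset ω, (ip Φ j v) ^ 2
        = (Tsum Φ j - σ0) - ∑ l ∈ Lt, (ip Φ j (ω.1 l)) ^ 2 := by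
      intro ω hω
      have h1 := hTsplit Φ ω
      rw [hsplitS ω, hsig ω hω] at h1
      linarith
    rw [hW, Finset.sum_congr rfl hper, Finset.sum_sub_distrib, Finset.sum_const, nsmul_eq_mul, hX]
  have c1 : ((k - t : ℕ) : ℝ) = (k : ℝ) - t := by
    rw [Nat.cast_sub ht]
  have c2 : ((N - 1 - k : ℕ) : ℝ) = (N : ℝ) - 1 - k := by
    have h' : (N - 1 - k : ℕ) = N - (k + 1) := by omega
    rw [h', Nat.cast_sub (by omega)]
    push_cast; ring
  have hd : (0 : ℝ) < (N : ℝ) - 1 - t := by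
    have h1 : (t : ℝ) ≤ k := Nat.cast_le.2 ht
    have h2 : (k : ℝ) + 2 < N := by exact_mod_cast hk
    linarith
  have hXval : X = (A.card : ℝ) * (((k - t : ℕ) : ℝ) * (Tsum Φ j - σ0) / ((N : ℝ) - 1 - t)) := by
    rw [e2] at e1
    rw [c1] at e1 ⊢
    rw [c2] at e1
    field_simp
    linear_combination e1
  have hLHS : (∑ ω ∈ A, ∑ l : Fin k, (ip Φ j (ω.1 l)) ^ 2) = (A.card : ℝ) * σ0 + X := by
    rw [Finset.sum_congr rfl (fun ω hω => by rw [hsplitS ω, hsig ω hω]),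
      Finset.sum_add_distrib, Finset.sum_const, nsmul_eq_mul, hX]
  have hRHS : (∑ ω ∈ A, gfun Φ j k t ω)
      = (A.card : ℝ) * (σ0 + ((k - t : ℕ) : ℝ) * (Tsum Φ j - σ0) / ((N : ℝ) - 1 - t)) := by
    rw [Finset.sum_congr rfl (fun ω hω => by rw [gfun, hsig ω hω]),
      Finset.sum_const, nsmul_eq_mul]
  rw [hLHS, hRHS, hXval]
  ring

lemma filtY_le_comap (Φ : Matrix (Fin m) (Fin N) ℝ) (t : ℕ) :
    filtY (fun l (ω : OmegaT N k j) => (ip Φ j (ω.1 l)) ^ 2) t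
      ≤ MeasurableSpace.comap (Vmap Φ j t) ⊤ := by
  refine iSup_le fun l => ?_
  show MeasurableSpace.comap (fun ω : OmegaT N k j => (ip Φ j (ω.1 (l : Fin k))) ^ 2)
      inferInstance ≤ MeasurableSpace.comap (Vmap Φ j t) ⊤
  have hYl : (fun ω : OmegaT N k j => (ip Φ j (ω.1 (l : Fin k))) ^ 2)
      = (fun f : Fin k → ℝ => f l.1) ∘ (Vmap Φ j t) := by
    funext ω
    simp [Vmap, l.2]
  rw [hYl, ← MeasurableSpace.comap_comp]
  exact MeasurableSpace.comap_mono le_top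

lemma sigT_meas (Φ : Matrix (Fin m) (Fin N) ℝ) (t : ℕ) :
    Measurable[filtY (fun l (ω : OmegaT N k j) => (ip Φ j (ω.1 l)) ^ 2) t]
      (sigT Φ j t (k := k)) := by
  apply Finset.measurable_sum
  intro l hl
  have hl' : (l : ℕ) < t := (Finset.mem_filter.1 hl).2
  have h0 : Measurable[MeasurableSpace.comap
      (fun ω : OmegaT N k j => (ip Φ j (ω.1 l)) ^ 2) inferInstance]
      (fun ω : OmegaT N k j => (ip Φ j (ω.1 l)) ^ 2) :=
    Measurable.of_comap_le le_rfl
  exact h0.mono (le_iSup_of_le ⟨l, hl'⟩ le_rfl) le_rfl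

lemma condexp_eq (Φ : Matrix (Fin m) (Fin N) ℝ) (hk : k + 2 < N) (t : ℕ) (ht : t ≤ k) :
    gfun Φ j k t =ᵐ[unifT N k j]
      (unifT N k j)[(fun ω : OmegaT N k j => ∑ l : Fin k, (ip Φ j (ω.1 l)) ^ 2) |
        filtY (fun l (ω : OmegaT N k j) => (ip Φ j (ω.1 l)) ^ 2) t] := by
  set Y : Fin k → OmegaT N k j → ℝ := fun l ω => (ip Φ j (ω.1 l)) ^ 2 with hY
  have hm : filtY Y t ≤ (⊤ : MeasurableSpace (OmegaT N k j)) := (filtY Y).le t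
  haveI : SigmaFinite ((unifT N k j).trim hm) := by
    haveI := isFiniteMeasure_trim (μ := unifT N k j) hm
    infer_instance
  refine ae_eq_condExp_of_forall_setIntegral_eq hm (Integrable.of_finite) ?_ ?_ ?_
  · exact fun s _ _ => (Integrable.of_finite).integrableOn
  · -- set integral equality
    intro s hs _
    have hsat : ∀ ω ∈ s.toFinset, ∀ ω', Vmap Φ j t ω' = Vmap Φ j t ω → ω' ∈ s.toFinset := by
      obtain ⟨B, -, hB⟩ := filtY_le_comap Φ t s hs
      intro ω hω ω' hV
      rw [Set.mem_toFinset] at hω ⊢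
      rw [← hB] at hω ⊢
      show Vmap Φ j t ω' ∈ B
      rw [hV]
      exact hω
    have hsum : ∑ x ∈ s.toFinset, gfun Φ j k t x
        = ∑ x ∈ s.toFinset, (∑ l : Fin k, (ip Φ j (x.1 l)) ^ 2) := by
      rw [← Finset.sum_fiberwise_of_maps_to
          (fun x hx => Finset.mem_image_of_mem (Vmap Φ j t) hx) (gfun Φ j k t),
        ← Finset.sum_fiberwise_of_maps_to
          (fun x hx => Finset.mem_image_of_mem (Vmap Φ j t) hx)
          (fun x => ∑ l : Fin k, (ip Φ j (x.1 l)) ^ 2)]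
      refine Finset.sum_congr rfl fun y hy => ?_
      obtain ⟨ω₀, hω₀, rfl⟩ := Finset.mem_image.1 hy
      have hfib : s.toFinset.filter (fun x => Vmap Φ j t x = Vmap Φ j t ω₀)
          = univ.filter (fun x => Vmap Φ j t x = Vmap Φ j t ω₀) := by
        ext x
        simp only [Finset.mem_filter, Finset.mem_univ, true_and, and_iff_right_iff_imp]
        exact fun hV => hsat ω₀ hω₀ x hV
      rw [hfib, (fiber_sum Φ hk t ht ω₀).symm]
    -- convert integrals to sums
    have hconv : ∀ f : OmegaT N k j → ℝ,
        ∫ x in s, f x ∂(unifT N k j)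
          = ((Fintype.card (OmegaT N k j) : ℝ≥0∞)⁻¹).toReal • ∑ x ∈ s.toFinset, f x := by
      intro f
      have h1 : IntegrableOn f (↑s.toFinset) (unifT N k j) :=
        Integrable.integrableOn Integrable.of_finite
      have h2 : ∫ x in s, f x ∂(unifT N k j)
          = ∫ x in (↑s.toFinset : Set (OmegaT N k j)), f x ∂(unifT N k j) := by
        rw [Set.coe_toFinset]
      rw [h2, integral_finset _ h1, Finset.smul_sum]
      refine Finset.sum_congr rfl fun x _ => ?_
      congr 1
      rw [Measure.real, unifT, Measure.smul_apply, Measure.count_singleton, smul_eq_mul, mul_one]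
    rw [hconv, hconv, hsum]
  · exact ((sigT_meas Φ t).add
      (((measurable_const.sub (sigT_meas Φ t)).const_mul _).div_const _)).stronglyMeasurable.aestronglyMeasurable

lemma gfun_diff_bound (Φ : Matrix (Fin m) (Fin N) ℝ) (hk : k + 2 < N) (t : ℕ)
    (ht1 : 1 ≤ t) (ht2 : t ≤ k) (μ : ℝ) (hμ0 : 0 ≤ μ)
    (hμ : ∀ i i' : Fin N, i ≠ i' → |ip Φ i i'| ≤ μ) (ω : OmegaT N k j) :
    |gfun Φ j k t ω - gfun Φ j k (t - 1) ω| ≤ 2 * μ ^ 2 := by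
  have hipg : ∀ i : Fin N, i ≠ j → (ip Φ j i) ^ 2 ≤ μ ^ 2 := by
    intro i hi
    have h := hμ j i (Ne.symm hi)
    calc (ip Φ j i) ^ 2 = |ip Φ j i| ^ 2 := (sq_abs _).symm
      _ ≤ μ ^ 2 := pow_le_pow_left₀ (abs_nonneg _) h 2
  have hk1 : t - 1 < k := by omega
  set lt1 : Fin k := ⟨t - 1, hk1⟩ with hlt1
  -- sigT split
  have hsig_split : sigT Φ j t ω = sigT Φ j (t - 1) ω + (ip Φ j (ω.1 lt1)) ^ 2 := by
    have hins : univ.filter (fun l : Fin k => (l : ℕ) < t)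
        = insert lt1 (univ.filter (fun l : Fin k => (l : ℕ) < t - 1)) := by
      ext l
      simp only [Finset.mem_filter, Finset.mem_univ, true_and, Finset.mem_insert]
      constructor
      · intro h
        by_cases hc : (l : ℕ) = t - 1
        · exact Or.inl (Fin.ext hc)
        · exact Or.inr (by omega)
      · rintro (rfl | h)
        · show (t - 1 : ℕ) < t; omega
        · omega
    rw [sigT, sigT, hins, Finset.sum_insert (by
      simp only [Finset.mem_filter, Finset.mem_univ, true_and]
      show ¬ ((t - 1 : ℕ) < t - 1); omega)]
    ring
  -- residual bounds
  have himg1 : ((univ.filter (fun l : Fin k => (l : ℕ) < t - 1)).image ω.1)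
      ⊆ (univ : Finset (Fin N)).erase j := by
    intro i hi
    rcases Finset.mem_image.1 hi with ⟨l, -, rfl⟩
    exact Finset.mem_erase.2 ⟨ω.2.2 l, Finset.mem_univ _⟩
  have hsig_img : sigT Φ j (t - 1) ω
      = ∑ i ∈ (univ.filter (fun l : Fin k => (l : ℕ) < t - 1)).image ω.1, (ip Φ j i) ^ 2 := by
    rw [Finset.sum_image (fun a _ b _ hab => ω.2.1 hab)]
    rfl
  have hres_eq : Tsum Φ j - sigT Φ j (t - 1) ω
      = ∑ i ∈ ((univ : Finset (Fin N)).erase j) \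
          ((univ.filter (fun l : Fin k => (l : ℕ) < t - 1)).image ω.1), (ip Φ j i) ^ 2 := by
    have h1 := Finset.sum_sdiff (f := fun v => (ip Φ j v) ^ 2) himg1
    rw [Tsum, ← h1, hsig_img]
    ring
  have hres0 : 0 ≤ Tsum Φ j - sigT Φ j (t - 1) ω := by
    rw [hres_eq]
    exact Finset.sum_nonneg fun i _ => sq_nonneg _
  have hcard1 : (((univ : Finset (Fin N)).erase j) \
      ((univ.filter (fun l : Fin k => (l : ℕ) < t - 1)).image ω.1)).card = N - t := by
    rw [Finset.card_sdiff_of_subset himg1, Finset.card_erase_of_mem (Finset.mem_univ j),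
      Finset.card_image_of_injective _ ω.2.1, card_lt_t (t - 1) (by omega),
      card_univ, Fintype.card_fin]
    omega
  have hresU : Tsum Φ j - sigT Φ j (t - 1) ω ≤ ((N : ℝ) - t) * μ ^ 2 := by
    rw [hres_eq]
    calc ∑ i ∈ ((univ : Finset (Fin N)).erase j) \
          ((univ.filter (fun l : Fin k => (l : ℕ) < t - 1)).image ω.1), (ip Φ j i) ^ 2
        ≤ (((univ : Finset (Fin N)).erase j) \
          ((univ.filter (fun l : Fin k => (l : ℕ) < t - 1)).image ω.1)).card • (μ ^ 2) := by
          refine Finset.sum_le_card_nsmul _ _ _ fun i hi => ?_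
          exact hipg i (Finset.mem_erase.1 (Finset.mem_sdiff.1 hi).1).1
      _ = ((N - t : ℕ) : ℝ) * μ ^ 2 := by rw [hcard1, nsmul_eq_mul]
      _ = ((N : ℝ) - t) * μ ^ 2 := by rw [Nat.cast_sub (by omega)]
  -- abbreviations and algebra
  set B := sigT Φ j (t - 1) ω with hB
  set Yt := (ip Φ j (ω.1 lt1)) ^ 2 with hYt
  set T := Tsum Φ j with hT
  set d : ℝ := (N : ℝ) - 1 - t with hd
  set e : ℝ := (N : ℝ) - 1 - k with he
  have hdpos : (2 : ℝ) ≤ d := by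
    have h1 : (t : ℝ) ≤ k := Nat.cast_le.2 ht2
    have h2 : (k : ℝ) + 3 ≤ N := by exact_mod_cast (by omega : k + 3 ≤ N)
    rw [hd]; linarith
  have hepos : (2 : ℝ) ≤ e := by
    have h2 : (k : ℝ) + 3 ≤ N := by exact_mod_cast (by omega : k + 3 ≤ N)
    rw [he]; linarith
  have hed : e ≤ d := by
    have h1 : (t : ℝ) ≤ k := Nat.cast_le.2 ht2
    rw [he, hd]; linarith
  have c1 : ((k - t : ℕ) : ℝ) = (k : ℝ) - t := Nat.cast_sub ht2
  have c0 : ((k - (t - 1) : ℕ) : ℝ) = (k : ℝ) - t + 1 := by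
    have h' : (k - (t - 1) : ℕ) = k - t + 1 := by omega
    rw [h', Nat.cast_add, Nat.cast_sub ht2, Nat.cast_one]
  have ct1 : ((t - 1 : ℕ) : ℝ) = (t : ℝ) - 1 := by
    rw [Nat.cast_sub ht1, Nat.cast_one]
  have hden1 : (N : ℝ) - 1 - ((t - 1 : ℕ) : ℝ) = d + 1 := by
    rw [ct1, hd]; ring
  have hYtB : 0 ≤ Yt ∧ Yt ≤ μ ^ 2 :=
    ⟨sq_nonneg _, hipg _ (ω.2.2 lt1)⟩
  have hRu : T - B ≤ (d + 1) * μ ^ 2 := by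
    have hNt : (N : ℝ) - t = d + 1 := by rw [hd]; ring
    rw [← hNt]
    exact hresU
  have hiden : gfun Φ j k t ω - gfun Φ j k (t - 1) ω
      = (Yt * e * (d + 1) - (T - B) * e) / (d * (d + 1)) := by
    rw [gfun, gfun, hsig_split, hden1, c1, c0, ← hT, ← hd]
    have he' : (k : ℝ) - t = d - e := by rw [hd, he]; ring
    rw [he']
    have hd0 : d ≠ 0 := by linarith
    have hd1 : d + 1 ≠ 0 := by linarith
    field_simp
    ring
  rw [hiden]
  have hY0 : 0 ≤ Yt := hYtB.1
  have hYu : Yt ≤ μ ^ 2 := hYtB.2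
  clear hiden hres_eq hsig_img hsig_split hcard1 himg1 hresU hipg hμ hYtB
  clear_value B Yt T d e
  clear hB hYt hT hd he c0 c1 ct1 hden1 hlt1
  clear lt1 hk1 ω
  have hdd : (0 : ℝ) < d * (d + 1) := by nlinarith
  have h0e : (0 : ℝ) ≤ e := by linarith
  have hm2 : (0 : ℝ) ≤ μ ^ 2 := sq_nonneg μ
  rw [abs_le]
  constructor
  · rw [neg_le, ← neg_div, div_le_iff₀ hdd]
    have p1 : 0 ≤ Yt * e * (d + 1) :=
      mul_nonneg (mul_nonneg hY0 h0e) (by linarith)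
    have p2 : (T - B) * e ≤ ((d + 1) * μ ^ 2) * e :=
      mul_le_mul_of_nonneg_right hRu h0e
    have p3 : ((d + 1) * μ ^ 2) * e ≤ ((d + 1) * μ ^ 2) * d :=
      mul_le_mul_of_nonneg_left hed (by nlinarith)
    nlinarith
  · rw [div_le_iff₀ hdd]
    have p1 : 0 ≤ (T - B) * e := mul_nonneg hres0 h0e
    have p2 : Yt * e ≤ μ ^ 2 * d := by nlinarith
    have p3 : Yt * e * (d + 1) ≤ μ ^ 2 * d * (d + 1) :=
      mul_le_mul_of_nonneg_right p2 (by linarith)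
    nlinarith

end Stmt9Aux

/-- Lemma: `(Z_t)` is a bounded-differences martingale. -/
theorem stmt9 (m N k : ℕ) (hk : k < N - 2) (j : Fin N)
    (Φ : Matrix (Fin m) (Fin N) ℝ) (hcols : unitCols Φ)
    (μ : ℝ)
    -- `μ` is the coherence of `Φ`
    (hμ : ∀ i i' : Fin N, i ≠ i' → |ip Φ i i'| ≤ μ) :
    let Y : Fin k → OmegaT N k j → ℝ := fun l ω => (ip Φ j (ω.1 l)) ^ 2
    let S : OmegaT N k j → ℝ := fun ω => ∑ l, Y l ω
    let Z : ℕ → OmegaT N k j → ℝ := fun t => (unifT N k j)[S | filtY Y t]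
    Martingale Z (filtY Y) (unifT N k j) ∧
      ∀ t : ℕ, 1 ≤ t → t ≤ k →
        ∀ᵐ ω ∂(unifT N k j),
          |Z t ω - Z (t - 1) ω| ≤ 2 * μ ^ 2 * ((N : ℝ) - 2) / ((N : ℝ) - k - 2) := by
  intro Y S Z
  have hkN : k + 2 < N := by omega
  constructor
  · exact martingale_condExp S (filtY Y) (unifT N k j)
  · intro t ht1 ht2
    have hμ0 : 0 ≤ μ := by
      have h01 : (⟨0, by omega⟩ : Fin N) ≠ ⟨1, by omega⟩ := by
        simp [Fin.ext_iff]
      exact le_trans (abs_nonneg _) (hμ _ _ h01)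
    have h1 := Stmt9Aux.condexp_eq (j := j) Φ hkN t ht2
    have h2 := Stmt9Aux.condexp_eq (j := j) Φ hkN (t - 1) (le_trans (Nat.sub_le t 1) ht2)
    filter_upwards [h1, h2] with ω e1 e2
    have hz1 : Z t ω = Stmt9Aux.gfun Φ j k t ω := e1.symm
    have hz2 : Z (t - 1) ω = Stmt9Aux.gfun Φ j k (t - 1) ω := e2.symm
    rw [hz1, hz2]
    refine le_trans (Stmt9Aux.gfun_diff_bound Φ hkN t ht1 ht2 μ hμ0 hμ ω) ?_
    have hpos : (0 : ℝ) < (N : ℝ) - k - 2 := by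
      have h2 : (k : ℝ) + 3 ≤ N := by exact_mod_cast (by omega : k + 3 ≤ N)
      linarith
    have hone : (1 : ℝ) ≤ ((N : ℝ) - 2) / ((N : ℝ) - k - 2) := by
      rw [le_div_iff₀ hpos]
      have : (0 : ℝ) ≤ (k : ℝ) := Nat.cast_nonneg k
      linarith
    calc 2 * μ ^ 2 = 2 * μ ^ 2 * 1 := by ring
      _ ≤ 2 * μ ^ 2 * (((N : ℝ) - 2) / ((N : ℝ) - k - 2)) :=
          mul_le_mul_of_nonneg_left hone (by positivity)
      _ = 2 * μ ^ 2 * ((N : ℝ) - 2) / ((N : ℝ) - k - 2) := by rw [mul_div_assoc]
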